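/- Let N, k be positive integers and ω = e^{2πi/N}. For partitions Π_1, Π_2 of {1,…,2k}, the sum Σ_{m ∈ E_{Π_1}} Σ_{n ∈ E_{Π_2}} ω^{m·n}, where m·n = m_1 n_1 + ⋯ + m_k n_k − m_{k+1} n_{k+1} − ⋯ − m_{2k} n_{2k}, is a strictly positive real number. Equivalently, the matrix element ⟨E_{Π_1}| F^{⊗k,k} |E_{Π_2}⟩ = N^{−(k + (|Π_1|+|Π_2|)/2)} Σ_{m∈E_{Π_1}, n∈E_{Π_2}} ω^{m·n} is real and positive. -/

import Mathlib

open scoped BigOperators Classical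

/-- The number of blocks `|Π|` of the partition corresponding to `r`. -/
noncomputable def numBlocks {n : ℕ} (r : Setoid (Fin n)) : ℕ :=
  Nat.card (Quotient r)

/-- The Fourier transform `F = N^{-1/2} ∑_{m,n=1}^N ω^{mn} |m⟩⟨n|`, `ω = e^{2πi/N}`. -/
noncomputable def Fmat (N : ℕ) : Matrix (Fin N) (Fin N) ℂ :=
  fun i j => (Real.sqrt N : ℂ)⁻¹ *
    Complex.exp (2 * Real.pi * Complex.I * (((i : ℕ) + 1) * ((j : ℕ) + 1)) / N)

/-- `F^{⊗k,k} = F^{⊗k} ⊗ (conj F)^{⊗k}` as a matrix on `(ℂ^N)^{⊗2k}`. -/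
noncomputable def Fkk (N k : ℕ) : Matrix (Fin (2*k) → Fin N) (Fin (2*k) → Fin N) ℂ :=
  fun a b => ∏ j : Fin (2*k),
    if (j : ℕ) < k then Fmat N (a j) (b j) else (starRingEnd ℂ) (Fmat N (a j) (b j))

/-- The set `E_Π` of tuples whose coordinates are equal on each block of `r`. -/
def Eset (N n : ℕ) (r : Setoid (Fin n)) : Set (Fin n → Fin N) :=
  {v | ∀ i j : Fin n, r i j → v i = v j}

/-- The unit vector `|E_Π⟩ = |E_Π|^{-1/2} ∑_{n ∈ E_Π} |n⟩`, where `|E_Π| = N^{|Π|}`. -/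
noncomputable def ketE (N n : ℕ) (r : Setoid (Fin n)) : (Fin n → Fin N) → ℂ :=
  fun v => if v ∈ Eset N n r then ((Real.sqrt ((N : ℝ) ^ numBlocks r) : ℂ))⁻¹ else 0

/-- The matrix element `⟨E_{Π₁}| F^{⊗k,k} |E_{Π₂}⟩`. -/
noncomputable def matEltE (N k : ℕ) (r₁ r₂ : Setoid (Fin (2*k))) : ℂ :=
  ∑ a : Fin (2*k) → Fin N, ∑ b : Fin (2*k) → Fin N,
    (starRingEnd ℂ) (ketE N (2*k) r₁ a) * Fkk N k a b * ketE N (2*k) r₂ b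

/-- The pairing `m·n = ∑_{j≤k} m_j n_j - ∑_{j>k} m_j n_j`, with coordinates of
`Fin N` read as the values `1,…,N`. -/
def dotp (N k : ℕ) (m n : Fin (2*k) → Fin N) : ℤ :=
  ∑ j : Fin (2*k),
    (if (j : ℕ) < k then 1 else -1) * (((m j : ℕ) + 1) : ℤ) * (((n j : ℕ) + 1) : ℤ)

/-- The exponential sum `∑_{m ∈ E_{Π₁}} ∑_{n ∈ E_{Π₂}} ω^{m·n}`, `ω = e^{2πi/N}`. -/
noncomputable def expSum (N k : ℕ) (r₁ r₂ : Setoid (Fin (2*k))) : ℂ :=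
  ∑ m ∈ Finset.univ.filter (· ∈ Eset N (2*k) r₁),
    ∑ n ∈ Finset.univ.filter (· ∈ Eset N (2*k) r₂),
      Complex.exp (2 * Real.pi * Complex.I / N) ^ (dotp N k m n)


noncomputable def om (N : ℕ) : ℂ := Complex.exp (2 * Real.pi * Complex.I / N)

lemma om_zpow (N : ℕ) (s : ℤ) :
    om N ^ s = Complex.exp (s * (2 * Real.pi * Complex.I / N)) :=
  (Complex.exp_int_mul _ s).symm

lemma om_pow_N (N : ℕ) (hN : 0 < N) : om N ^ (N : ℕ) = 1 := by
  have hNc : (N:ℂ) ≠ 0 := Nat.cast_ne_zero.2 hN.ne'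
  rw [om, ← Complex.exp_nat_mul]
  rw [show (N:ℂ) * (2*Real.pi*Complex.I/N) = 2*Real.pi*Complex.I by
    field_simp]
  exact Complex.exp_two_pi_mul_I

lemma om_zpow_eq_one_iff (N : ℕ) (hN : 0 < N) (s : ℤ) :
    om N ^ s = 1 ↔ (N:ℤ) ∣ s := by
  rw [om_zpow, Complex.exp_eq_one_iff]
  have hNc : (N:ℂ) ≠ 0 := Nat.cast_ne_zero.2 hN.ne'
  have h2 : (2*(Real.pi:ℂ)*Complex.I) ≠ 0 := by
    simp [Real.pi_ne_zero, Complex.I_ne_zero, Complex.ofReal_ne_zero]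
  constructor
  · rintro ⟨n, hn⟩
    refine ⟨n, ?_⟩
    have h3 : (s:ℂ) * (2*(Real.pi:ℂ)*Complex.I) = ((N:ℂ) * n) * (2*(Real.pi:ℂ)*Complex.I) := by
      field_simp at hn
      linear_combination (2*(Real.pi:ℂ)*Complex.I) * hn
    have h4 := mul_right_cancel₀ h2 h3
    exact_mod_cast h4
  · rintro ⟨n, rfl⟩
    exact ⟨n, by field_simp; rw [Int.cast_mul, Int.cast_natCast]⟩

lemma sum_om (N : ℕ) (hN : 0 < N) (s : ℤ) :
    ∑ t : Fin N, om N ^ ((((t:ℕ) + 1 : ℕ) : ℤ) * s) =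
      if (N:ℤ) ∣ s then (N:ℂ) else 0 := by
  have hω : om N ≠ 0 := Complex.exp_ne_zero _
  have hterm : ∀ t : Fin N, om N ^ ((((t:ℕ) + 1 : ℕ) : ℤ) * s) = (om N ^ s) ^ ((t:ℕ)+1) := by
    intro t
    rw [mul_comm, zpow_mul, ← zpow_natCast]
  simp only [hterm]
  by_cases h : (N:ℤ) ∣ s
  · rw [if_pos h, (om_zpow_eq_one_iff N hN s).2 h]
    simp
  · rw [if_neg h]
    set x := om N ^ s with hx
    have hx1 : x ≠ 1 := fun hc => h ((om_zpow_eq_one_iff N hN s).1 hc)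
    have hxN : x ^ N = 1 := by
      rw [hx, ← zpow_natCast, ← zpow_mul, mul_comm, zpow_mul, zpow_natCast,
        om_pow_N N hN, one_zpow]
    calc ∑ t : Fin N, x ^ ((t:ℕ)+1)
        = ∑ i ∈ Finset.range N, x ^ (i+1) := by
          rw [Finset.sum_range fun i => x ^ (i+1)]
      _ = x * ∑ i ∈ Finset.range N, x ^ i := by
          rw [Finset.mul_sum]; congr 1; ext i; ring
      _ = 0 := by
          rw [geom_sum_eq hx1, hxN]; simp

noncomputable def Sblk (N k : ℕ) (r : Setoid (Fin (2*k))) (m : Fin (2*k) → Fin N)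
    (c : Quotient r) : ℤ :=
  ∑ j ∈ Finset.univ.filter (fun j => Quotient.mk r j = c),
    (if (j : ℕ) < k then 1 else -1) * (((m j : ℕ) + 1) : ℤ)

noncomputable def esetEquiv (N n : ℕ) (r : Setoid (Fin n)) :
    (Quotient r → Fin N) ≃ {v : Fin n → Fin N // v ∈ Eset N n r} where
  toFun g := ⟨fun i => g (Quotient.mk r i), fun i j h => by
    show g (Quotient.mk r i) = g (Quotient.mk r j); rw [Quotient.sound h]⟩
  invFun v := fun c => Quotient.liftOn c v.1 (fun a b h => v.2 a b h)
  left_inv g := funext fun c => by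
    induction c using Quotient.inductionOn with
    | h i => rfl
  right_inv v := rfl

lemma step1 (N k : ℕ) (r : Setoid (Fin (2*k))) (f : (Fin (2*k) → Fin N) → ℂ) :
    ∑ n ∈ Finset.univ.filter (· ∈ Eset N (2*k) r), f n
      = ∑ g : Quotient r → Fin N, f (fun i => g (Quotient.mk r i)) := by
  rw [Finset.sum_subtype (Finset.univ.filter (· ∈ Eset N (2*k) r))
    (p := (· ∈ Eset N (2*k) r)) (by simp) f]
  exact ((esetEquiv N (2*k) r).sum_comp (fun v => f v.1)).symm

lemma step2 (N k : ℕ) (r : Setoid (Fin (2*k))) (m : Fin (2*k) → Fin N)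
    (g : Quotient r → Fin N) :
    dotp N k m (fun i => g (Quotient.mk r i))
      = ∑ c : Quotient r, ((((g c : ℕ) + 1 : ℕ)) : ℤ) * Sblk N k r m c := by
  rw [dotp, ← Finset.sum_fiberwise Finset.univ (fun j => Quotient.mk r j)]
  refine Finset.sum_congr rfl fun c _ => ?_
  rw [Sblk, Finset.mul_sum]
  refine Finset.sum_congr rfl fun j hj => ?_
  simp only [Finset.mem_filter] at hj
  rw [hj.2]
  push_cast
  ring

lemma step3 (N k : ℕ) (hN : 0 < N) (r : Setoid (Fin (2*k))) (m : Fin (2*k) → Fin N) :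
    ∑ g : Quotient r → Fin N,
        om N ^ (∑ c : Quotient r, ((((g c : ℕ) + 1 : ℕ)) : ℤ) * Sblk N k r m c)
      = ∏ c : Quotient r, ((if (N:ℤ) ∣ Sblk N k r m c then (N:ℝ) else 0 : ℝ) : ℂ) := by
  have hterm : ∀ g : Quotient r → Fin N,
      om N ^ (∑ c : Quotient r, ((((g c : ℕ) + 1 : ℕ)) : ℤ) * Sblk N k r m c)
        = ∏ c : Quotient r, om N ^ (((((g c : ℕ) + 1 : ℕ)) : ℤ) * Sblk N k r m c) := by
    intro g
    rw [om_zpow, Int.cast_sum, Finset.sum_mul, Complex.exp_sum]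
    exact Finset.prod_congr rfl fun c _ => (om_zpow N _).symm
  simp only [hterm]
  have key : (∏ c : Quotient r, ∑ t : Fin N, om N ^ (((((t : ℕ) + 1 : ℕ)) : ℤ) * Sblk N k r m c))
      = ∑ g : Quotient r → Fin N, ∏ c : Quotient r, om N ^ (((((g c : ℕ) + 1 : ℕ)) : ℤ) * Sblk N k r m c) := by
    rw [Finset.prod_univ_sum, Fintype.piFinset_univ]
  rw [← key]
  refine Finset.prod_congr rfl fun c _ => ?_
  rw [sum_om N hN]
  split <;> norm_num

lemma innerSumE (N k : ℕ) (hN : 0 < N) (r : Setoid (Fin (2*k))) (m : Fin (2*k) → Fin N) :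
    ∑ n ∈ Finset.univ.filter (· ∈ Eset N (2*k) r), om N ^ (dotp N k m n)
      = ((∏ c : Quotient r, (if (N:ℤ) ∣ Sblk N k r m c then (N:ℝ) else 0) : ℝ) : ℂ) := by
  rw [step1]
  push_cast
  rw [← step3 N k hN r m]
  exact Finset.sum_congr rfl fun g _ => by rw [step2 N k r m g]

noncomputable def Pprod (N k : ℕ) (r : Setoid (Fin (2*k))) (m : Fin (2*k) → Fin N) : ℝ :=
  ∏ c : Quotient r, (if (N:ℤ) ∣ Sblk N k r m c then (N:ℝ) else 0)

lemma expSum_eq (N k : ℕ) (hN : 0 < N) (r₁ r₂ : Setoid (Fin (2*k))) :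
    expSum N k r₁ r₂
      = ((∑ m ∈ Finset.univ.filter (· ∈ Eset N (2*k) r₁), Pprod N k r₂ m : ℝ) : ℂ) := by
  rw [expSum, Complex.ofReal_sum]
  exact Finset.sum_congr rfl fun m _ => innerSumE N k hN r₂ m

lemma Pprod_nonneg (N k : ℕ) (r : Setoid (Fin (2*k))) (m : Fin (2*k) → Fin N) :
    0 ≤ Pprod N k r m :=
  Finset.prod_nonneg fun c _ => by split <;> positivity

lemma Pprod_pos (N k : ℕ) (hN : 0 < N) (r : Setoid (Fin (2*k))) :
    0 < Pprod N k r (fun _ => ⟨N - 1, by omega⟩) := by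
  refine Finset.prod_pos fun c _ => ?_
  have hdvd : (N:ℤ) ∣ Sblk N k r (fun _ => ⟨N - 1, by omega⟩) c := by
    rw [Sblk]
    refine Finset.dvd_sum fun j _ => ?_
    have h1 : (((N - 1 : ℕ) : ℤ) + 1) = (N : ℤ) := by omega
    simp only [h1]
    exact dvd_mul_left _ _
  rw [if_pos hdvd]
  exact_mod_cast hN

lemma expSum_pos (N k : ℕ) (hN : 0 < N) (r₁ r₂ : Setoid (Fin (2*k))) :
    (expSum N k r₁ r₂).im = 0 ∧ 0 < (expSum N k r₁ r₂).re := by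
  rw [expSum_eq N k hN r₁ r₂]
  refine ⟨Complex.ofReal_im _, ?_⟩
  rw [Complex.ofReal_re]
  refine Finset.sum_pos' (fun m _ => Pprod_nonneg N k r₂ m) ?_
  refine ⟨fun _ => ⟨N - 1, by omega⟩, ?_, Pprod_pos N k hN r₂⟩
  rw [Finset.mem_filter]
  exact ⟨Finset.mem_univ _, fun _ _ _ => rfl⟩

lemma Fkk_eq (N k : ℕ) (a b : Fin (2*k) → Fin N) :
    Fkk N k a b = (((N:ℝ)⁻¹) ^ k : ℝ) * om N ^ (dotp N k a b) := by
  have hfac : ∀ j : Fin (2*k),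
      (if (j:ℕ) < k then Fmat N (a j) (b j) else (starRingEnd ℂ) (Fmat N (a j) (b j)))
        = (Real.sqrt N : ℂ)⁻¹ *
          Complex.exp ((((if (j:ℕ) < k then 1 else -1 : ℤ) * (((a j : ℕ) + 1) : ℤ)
            * (((b j : ℕ) + 1) : ℤ) : ℤ) : ℂ) * (2*Real.pi*Complex.I/N)) := by
    intro j
    by_cases h : (j:ℕ) < k
    · simp only [if_pos h, Fmat]
      congr 1
      push_cast
      ring
    · simp only [if_neg h, Fmat, map_mul]
      rw [← Complex.exp_conj, map_inv₀, Complex.conj_ofReal]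
      congr 1
      rw [map_div₀]
      simp only [map_mul, Complex.conj_I, Complex.conj_ofReal, map_ofNat, map_add, map_one,
        Complex.conj_natCast]
      push_cast
      ring
  rw [Fkk]
  simp only [hfac]
  rw [Finset.prod_mul_distrib, Finset.prod_const, Finset.card_univ, Fintype.card_fin,
    ← Complex.exp_sum, om_zpow, dotp, Int.cast_sum, Finset.sum_mul]
  congr 1
  rw [pow_mul]
  have h3 : ((Real.sqrt N : ℂ))⁻¹ ^ 2 = ((N:ℝ)⁻¹ : ℝ) := by
    rw [inv_pow]
    norm_cast
    rw [Real.sq_sqrt (Nat.cast_nonneg N)]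
  rw [h3]
  norm_cast

lemma matEltE_eq (N k : ℕ) (hN : 0 < N) (r₁ r₂ : Setoid (Fin (2*k))) :
    matEltE N k r₁ r₂
      = (((Real.sqrt ((N:ℝ) ^ numBlocks r₁))⁻¹ * (Real.sqrt ((N:ℝ) ^ numBlocks r₂))⁻¹
          * ((N:ℝ)⁻¹) ^ k : ℝ) : ℂ) * expSum N k r₁ r₂ := by
  rw [matEltE, expSum]
  simp only [Finset.sum_filter]
  rw [Finset.mul_sum]
  refine Finset.sum_congr rfl fun a _ => ?_
  by_cases ha : a ∈ Eset N (2*k) r₁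
  · rw [if_pos ha, Finset.mul_sum]
    refine Finset.sum_congr rfl fun b _ => ?_
    by_cases hb : b ∈ Eset N (2*k) r₂
    · simp only [ketE, ha, hb, ite_true, if_pos hb]
      rw [map_inv₀, Complex.conj_ofReal, Fkk_eq N k a b]
      show _ = _ * (om N ^ dotp N k a b)
      push_cast
      ring
    · simp [ketE, hb]
  · simp [ketE, ha]

theorem stmt12 (N k : ℕ) (hN : 0 < N) (hk : 0 < k) (r₁ r₂ : Setoid (Fin (2*k))) :
    ((expSum N k r₁ r₂).im = 0 ∧ 0 < (expSum N k r₁ r₂).re) ∧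
    ((matEltE N k r₁ r₂).im = 0 ∧ 0 < (matEltE N k r₁ r₂).re) := by
  refine ⟨expSum_pos N k hN r₁ r₂, ?_⟩
  obtain ⟨him, hre⟩ := expSum_pos N k hN r₁ r₂
  rw [matEltE_eq N k hN r₁ r₂]
  have hC : 0 < (Real.sqrt ((N:ℝ) ^ numBlocks r₁))⁻¹ * (Real.sqrt ((N:ℝ) ^ numBlocks r₂))⁻¹
      * ((N:ℝ)⁻¹) ^ k := by
    have h1 : 0 < (N:ℝ) := by exact_mod_cast hN
    positivity
  constructor
  · simp only [Complex.mul_im, Complex.ofReal_re, Complex.ofReal_im, him, mul_zero, zero_mul,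
      add_zero]
  · simp only [Complex.mul_re, Complex.ofReal_re, Complex.ofReal_im, him, mul_zero, zero_mul,
      sub_zero]
    exact mul_pos hC hre
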